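/- For any finite family μ₁, …, μ_n of probability distributions on {−1, 1}, there exists one and only one multimaximal coupling: a probability distribution T on {−1, 1}^n whose i-th coordinate marginal is μ_i for every i, and such that for every pair of indices i, j the probability under T that the i-th and j-th coordinates are equal is maximal among all probability distributions on {−1, 1}^n with coordinate marginals μ₁, …, μ_n. -/

import Mathlib

abbrev Sgn : Type := ({-1, 1} : Finset ℤ)

def one : Sgn := ⟨1, by decide⟩

structure FDist (X : Type) [Fintype X] where
  m : X → ℝ
  nonneg : ∀ x, 0 ≤ m x
  total : ∑ x, m x = 1

def push {X Y : Type} [Fintype X] [DecidableEq Y] (p : X → ℝ) (f : X → Y) : Y → ℝ :=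
  fun y => ∑ x, if f x = y then p x else 0


/-- A coupling of a family of distributions on {−1,1}: a distribution on the product
with the given coordinate marginals. -/
def IsCouplingFam {n : ℕ} (μ : Fin n → FDist Sgn) (T : FDist (Fin n → Sgn)) : Prop :=
  ∀ i : Fin n, push T.m (fun f => f i) = (μ i).m

/-- Probability that coordinates i and j agree. -/
def prEq {n : ℕ} (T : FDist (Fin n → Sgn)) (i j : Fin n) : ℝ :=
  ∑ f, if f i = f j then T.m f else 0

/-- T is a multimaximal coupling: every pairwise agreement probability is maximal
among all couplings of the family. -/
def IsMultimax {n : ℕ} (μ : Fin n → FDist Sgn) (T : FDist (Fin n → Sgn)) : Prop :=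
  ∀ i j : Fin n, ∀ T' : FDist (Fin n → Sgn), IsCouplingFam μ T' → prEq T' i j ≤ prEq T i j

set_option linter.unreachableTactic false
set_option linter.unusedTactic false
set_option linter.unusedVariables false

def neg : Sgn := ⟨-1, by decide⟩
lemma sgn_cases (g : Sgn) : g = one ∨ g = neg := by revert g; decide
lemma one_ne_neg : one ≠ neg := by decide
lemma neg_ne_one : neg ≠ one := by decide
lemma sum_sgn (q : Sgn → ℝ) : ∑ g, q g = q one + q neg := by
  rw [show (Finset.univ : Finset Sgn) = {one, neg} by decide]
  rw [Finset.sum_insert (by decide), Finset.sum_singleton]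
lemma ne_one_iff (g : Sgn) : ¬ g = one ↔ g = neg := by revert g; decide
lemma ne_neg_iff (g : Sgn) : ¬ g = neg ↔ g = one := by revert g; decide

noncomputable def Pr {n : ℕ} (m : (Fin n → Sgn) → ℝ) (φ : (Fin n → Sgn) → Prop)
    [DecidablePred φ] : ℝ := ∑ f, if φ f then m f else 0

section PrLemmas
variable {n : ℕ} {m : (Fin n → Sgn) → ℝ}

lemma Pr_congr {φ ψ : (Fin n → Sgn) → Prop} [DecidablePred φ] [DecidablePred ψ]
    (h : ∀ f, m f ≠ 0 → (φ f ↔ ψ f)) : Pr m φ = Pr m ψ := by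
  refine Finset.sum_congr rfl fun f _ => ?_
  by_cases hm : m f = 0
  · simp [hm]
  · simp only [h f hm]

lemma Pr_split {φ : (Fin n → Sgn) → Prop} (ψ : (Fin n → Sgn) → Prop)
    [DecidablePred φ] [DecidablePred ψ] :
    Pr m φ = Pr m (fun f => φ f ∧ ψ f) + Pr m (fun f => φ f ∧ ¬ ψ f) := by
  rw [Pr, Pr, Pr, ← Finset.sum_add_distrib]
  refine Finset.sum_congr rfl fun f _ => ?_
  by_cases h1 : φ f <;> by_cases h2 : ψ f <;> simp [h1, h2]

lemma Pr_mono (h0 : ∀ f, 0 ≤ m f) {φ ψ : (Fin n → Sgn) → Prop}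
    [DecidablePred φ] [DecidablePred ψ] (h : ∀ f, φ f → ψ f) : Pr m φ ≤ Pr m ψ := by
  refine Finset.sum_le_sum fun f _ => ?_
  by_cases h1 : φ f
  · simp [h1, h f h1]
  · by_cases h2 : ψ f <;> simp [h1, h2, h0 f]

lemma Pr_eqf (f₀ : Fin n → Sgn) : Pr m (fun f => f = f₀) = m f₀ := by simp [Pr]

lemma Pr_total (ht : ∑ f, m f = 1) : Pr m (fun _ => True) = 1 := by simpa [Pr] using ht

lemma Pr_nonneg (h0 : ∀ f, 0 ≤ m f) (φ : (Fin n → Sgn) → Prop) [DecidablePred φ] :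
    0 ≤ Pr m φ := Finset.sum_nonneg fun f _ => by by_cases h : φ f <;> simp [h, h0 f]
end PrLemmas

/-- probability of `one` for the i-th marginal. -/
def pOf {n : ℕ} (μ : Fin n → FDist Sgn) (i : Fin n) : ℝ := (μ i).m one

/-- monotone (threshold) configuration w.r.t. the family. -/
def MonoF {n : ℕ} (μ : Fin n → FDist Sgn) (f : Fin n → Sgn) : Prop :=
  ∀ i j, pOf μ i ≤ pOf μ j → f i = one → f j = one

section Coupling
variable {n : ℕ} {μ : Fin n → FDist Sgn} {T : FDist (Fin n → Sgn)}

lemma pOf_nonneg (i : Fin n) : 0 ≤ pOf μ i := (μ i).nonneg one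

lemma mneg (i : Fin n) : (μ i).m neg = 1 - pOf μ i := by
  have := (μ i).total
  rw [sum_sgn] at this
  unfold pOf; linarith

lemma pOf_le_one (i : Fin n) : pOf μ i ≤ 1 := by
  have h := mneg (μ := μ) i
  have := (μ i).nonneg neg
  rw [h] at this; linarith

lemma marg_one (hc : IsCouplingFam μ T) (i : Fin n) :
    Pr T.m (fun f => f i = one) = pOf μ i := congrFun (hc i) one

lemma marg_neg (hc : IsCouplingFam μ T) (i : Fin n) :
    Pr T.m (fun f => f i = neg) = 1 - pOf μ i := by
  have h := congrFun (hc i) neg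
  rw [mneg] at h; exact h

lemma prEq_Pr (i j : Fin n) : prEq T i j = Pr T.m (fun f => f i = f j) := rfl

/-- key identity: for any coupling, prEq = 1 - p i - p j + 2 * P(fi=1 ∧ fj=1). -/
lemma prEq_formula (hc : IsCouplingFam μ T) (i j : Fin n) :
    prEq T i j = 1 - pOf μ i - pOf μ j
      + 2 * Pr T.m (fun f => f i = one ∧ f j = one) := by
  have h1 : Pr T.m (fun f => f i = f j)
      = Pr T.m (fun f => f i = one ∧ f j = one)
        + Pr T.m (fun f => f i = neg ∧ f j = neg) := by
    rw [Pr_split (ψ := fun f => f i = one)]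
    congr 1
    · exact Pr_congr fun f _ => by
        rcases sgn_cases (f i) with h | h <;> rcases sgn_cases (f j) with h' | h' <;>
          simp [h, h', one_ne_neg, neg_ne_one]
    · exact Pr_congr fun f _ => by
        rcases sgn_cases (f i) with h | h <;> rcases sgn_cases (f j) with h' | h' <;>
          simp [h, h', one_ne_neg, neg_ne_one]
  have h2 : Pr T.m (fun f => f j = neg)
      = Pr T.m (fun f => f i = one ∧ f j = neg)
        + Pr T.m (fun f => f i = neg ∧ f j = neg) := by
    rw [Pr_split (ψ := fun f => f i = one)]
    congr 1
    · exact Pr_congr fun f _ => by tauto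
    · exact Pr_congr fun f _ => by
        rcases sgn_cases (f i) with h | h <;> simp [h, one_ne_neg, neg_ne_one] <;> tauto
  have h3 : Pr T.m (fun f => f i = one)
      = Pr T.m (fun f => f i = one ∧ f j = one)
        + Pr T.m (fun f => f i = one ∧ f j = neg) := by
    rw [Pr_split (ψ := fun f => f j = one)]
    congr 1
    exact Pr_congr fun f _ => by
      rcases sgn_cases (f j) with h | h <;> simp [h, one_ne_neg, neg_ne_one] <;> tauto
  rw [prEq_Pr, h1]
  have h4 := marg_one hc i
  have h5 := marg_neg hc j
  rw [h3] at h4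
  rw [h2] at h5
  linarith
end Coupling

section Unique
variable {n : ℕ} {μ : Fin n → FDist Sgn} {T : FDist (Fin n → Sgn)}

/-- Case: f has both a one-coordinate and a neg-coordinate, and f is monotone. -/
lemma valA (hc : IsCouplingFam μ T) (hs : ∀ f, T.m f ≠ 0 → MonoF μ f)
    {f : Fin n → Sgn} (hm : MonoF μ f)
    {i₀ : Fin n} (hi₀ : f i₀ = one) (hmin : ∀ k, f k = one → pOf μ i₀ ≤ pOf μ k)
    {j₀ : Fin n} (hj₀ : f j₀ = neg) (hmax : ∀ k, f k = neg → pOf μ k ≤ pOf μ j₀) :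
    T.m f = pOf μ i₀ - pOf μ j₀ := by
  have hji : pOf μ j₀ < pOf μ i₀ := by
    by_contra h
    push_neg at h
    have := hm i₀ j₀ h hi₀
    rw [hj₀] at this; exact neg_ne_one this
  have e1 : T.m f = Pr T.m (fun g => g i₀ = one ∧ g j₀ = neg) := by
    rw [← Pr_eqf (m := T.m) f]
    refine Pr_congr fun g hg => ?_
    constructor
    · rintro rfl; exact ⟨hi₀, hj₀⟩
    · rintro ⟨h1, h2⟩
      funext k
      rcases sgn_cases (f k) with hk | hk
      · rw [hk]; exact hs g hg i₀ k (hmin k hk) h1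
      · rw [hk]
        rcases sgn_cases (g k) with hgk | hgk
        · exact absurd (hs g hg k j₀ (hmax k hk) hgk) (by rw [h2]; exact neg_ne_one)
        · exact hgk
  have e2 : Pr T.m (fun g => g i₀ = one)
      = Pr T.m (fun g => g i₀ = one ∧ g j₀ = one)
        + Pr T.m (fun g => g i₀ = one ∧ g j₀ = neg) := by
    rw [Pr_split (ψ := fun g => g j₀ = one)]
    congr 1
    exact Pr_congr fun g _ => by
      rcases sgn_cases (g j₀) with h | h <;> simp [h, one_ne_neg, neg_ne_one]
  have e3 : Pr T.m (fun g => g i₀ = one ∧ g j₀ = one)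
      = Pr T.m (fun g => g j₀ = one) := by
    refine Pr_congr fun g hg => ?_
    constructor
    · exact fun h => h.2
    · exact fun h => ⟨hs g hg j₀ i₀ hji.le h, h⟩
  have h4 := marg_one hc i₀
  have h5 := marg_one hc j₀
  rw [e2, e3, h5] at h4
  rw [e1]; linarith

/-- Case: f is everywhere neg (no one-coordinate), with a neg-coordinate maximizer. -/
lemma valB (hc : IsCouplingFam μ T) (hs : ∀ f, T.m f ≠ 0 → MonoF μ f)
    {f : Fin n → Sgn} (hall : ∀ k, f k = neg)
    {j₀ : Fin n} (hmax : ∀ k, pOf μ k ≤ pOf μ j₀) :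
    T.m f = 1 - pOf μ j₀ := by
  have e1 : T.m f = Pr T.m (fun g => g j₀ = neg) := by
    rw [← Pr_eqf (m := T.m) f]
    refine Pr_congr fun g hg => ?_
    constructor
    · rintro rfl; exact hall j₀
    · intro h2
      funext k
      rw [hall k]
      rcases sgn_cases (g k) with hgk | hgk
      · exact absurd (hs g hg k j₀ (hmax k) hgk) (by rw [h2]; exact neg_ne_one)
      · exact hgk
  rw [e1, marg_neg hc]

/-- Case: f is everywhere one, with a one-coordinate minimizer. -/
lemma valC (hc : IsCouplingFam μ T) (hs : ∀ f, T.m f ≠ 0 → MonoF μ f)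
    {f : Fin n → Sgn} (hall : ∀ k, f k = one)
    {i₀ : Fin n} (hmin : ∀ k, pOf μ i₀ ≤ pOf μ k) :
    T.m f = pOf μ i₀ := by
  have e1 : T.m f = Pr T.m (fun g => g i₀ = one) := by
    rw [← Pr_eqf (m := T.m) f]
    refine Pr_congr fun g hg => ?_
    constructor
    · rintro rfl; exact hall i₀
    · intro h1
      funext k
      rw [hall k]
      exact hs g hg i₀ k (hmin k) h1
  rw [e1, marg_one hc]

lemma valD (hc : IsCouplingFam μ T) (he : IsEmpty (Fin n)) (f : Fin n → Sgn) :
    T.m f = 1 := by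
  have : T.m f = Pr T.m (fun _ => True) := by
    rw [← Pr_eqf (m := T.m) f]
    exact Pr_congr fun g _ => by
      constructor
      · exact fun _ => trivial
      · exact fun _ => funext fun k => he.elim k
  rw [this, Pr_total T.total]

/-- Two couplings with monotone support are equal. -/
lemma eq_of_mono {T₁ T₂ : FDist (Fin n → Sgn)}
    (hc₁ : IsCouplingFam μ T₁) (hc₂ : IsCouplingFam μ T₂)
    (hs₁ : ∀ f, T₁.m f ≠ 0 → MonoF μ f) (hs₂ : ∀ f, T₂.m f ≠ 0 → MonoF μ f) :
    T₁ = T₂ := by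
  have hm : T₁.m = T₂.m := by
    funext f
    by_cases hmono : MonoF μ f
    · by_cases hS : ∃ k, f k = one
      · by_cases hN : ∃ k, f k = neg
        · obtain ⟨i₀, hi₀m, hmin⟩ := Finset.exists_min_image
            (Finset.univ.filter (fun k => f k = one)) (pOf μ)
            (by obtain ⟨k, hk⟩ := hS; exact ⟨k, by simp [hk]⟩)
          obtain ⟨j₀, hj₀m, hmax⟩ := Finset.exists_max_image
            (Finset.univ.filter (fun k => f k = neg)) (pOf μ)
            (by obtain ⟨k, hk⟩ := hN; exact ⟨k, by simp [hk]⟩)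
          simp only [Finset.mem_filter, Finset.mem_univ, true_and] at hi₀m hj₀m hmin hmax
          rw [valA hc₁ hs₁ hmono hi₀m (fun k hk => hmin k hk) hj₀m (fun k hk => hmax k hk),
              valA hc₂ hs₂ hmono hi₀m (fun k hk => hmin k hk) hj₀m (fun k hk => hmax k hk)]
        · push_neg at hN
          have hall : ∀ k, f k = one := fun k => by
            rcases sgn_cases (f k) with h | h
            · exact h
            · exact absurd h (hN k)
          obtain ⟨i₀, _, hmin⟩ := Finset.exists_min_image
            (Finset.univ : Finset (Fin n)) (pOf μ)
            (by obtain ⟨k, _⟩ := hS; exact ⟨k, Finset.mem_univ k⟩)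
          rw [valC hc₁ hs₁ hall (fun k => hmin k (Finset.mem_univ k)),
              valC hc₂ hs₂ hall (fun k => hmin k (Finset.mem_univ k))]
      · push_neg at hS
        have hall : ∀ k, f k = neg := fun k => by
          rcases sgn_cases (f k) with h | h
          · exact absurd h (hS k)
          · exact h
        by_cases hN : ∃ k : Fin n, True
        · obtain ⟨j₀, _, hmax⟩ := Finset.exists_max_image
            (Finset.univ : Finset (Fin n)) (pOf μ)
            (by obtain ⟨k, _⟩ := hN; exact ⟨k, Finset.mem_univ k⟩)
          rw [valB hc₁ hs₁ hall (fun k => hmax k (Finset.mem_univ k)),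
              valB hc₂ hs₂ hall (fun k => hmax k (Finset.mem_univ k))]
        · push_neg at hN
          have he : IsEmpty (Fin n) := ⟨fun k => hN k⟩
          rw [valD hc₁ he, valD hc₂ he]
    · have h1 : T₁.m f = 0 := by by_contra h; exact hmono (hs₁ f h)
      have h2 : T₂.m f = 0 := by by_contra h; exact hmono (hs₂ f h)
      rw [h1, h2]
  obtain ⟨m₁, _, _⟩ := T₁
  obtain ⟨m₂, _, _⟩ := T₂
  simpa using hm
end Unique

section Construction
open MeasureTheory Set
variable {n : ℕ}

/-- upper end of the interval of f : min of 1 and all p i with f i = one. -/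
noncomputable def Af (μ : Fin n → FDist Sgn) (f : Fin n → Sgn) : ℝ :=
  (insert (1:ℝ) ((Finset.univ.filter (fun i => f i = one)).image (pOf μ))).min'
    (Finset.insert_nonempty _ _)

/-- lower end: max of 0 and all p j with f j = neg. -/
noncomputable def Bf (μ : Fin n → FDist Sgn) (f : Fin n → Sgn) : ℝ :=
  (insert (0:ℝ) ((Finset.univ.filter (fun j => f j = neg)).image (pOf μ))).max'
    (Finset.insert_nonempty _ _)

noncomputable def Tm (μ : Fin n → FDist Sgn) (f : Fin n → Sgn) : ℝ :=
  max 0 (Af μ f - Bf μ f)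

noncomputable def thr (μ : Fin n → FDist Sgn) (t : ℝ) : Fin n → Sgn :=
  fun i => if t < pOf μ i then one else neg

variable {μ : Fin n → FDist Sgn}

lemma Bf_nonneg (f : Fin n → Sgn) : 0 ≤ Bf μ f :=
  Finset.le_max' _ _ (Finset.mem_insert_self _ _)

lemma Af_le_one (f : Fin n → Sgn) : Af μ f ≤ 1 :=
  Finset.min'_le _ _ (Finset.mem_insert_self _ _)

lemma Af_le (f : Fin n → Sgn) {i : Fin n} (h : f i = one) : Af μ f ≤ pOf μ i :=
  Finset.min'_le _ _ (Finset.mem_insert_of_mem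
    (Finset.mem_image_of_mem _ (by simp [h])))

lemma le_Bf (f : Fin n → Sgn) {j : Fin n} (h : f j = neg) : pOf μ j ≤ Bf μ f :=
  Finset.le_max' _ _ (Finset.mem_insert_of_mem
    (Finset.mem_image_of_mem _ (by simp [h])))

lemma Bf_le_iff {f : Fin n → Sgn} {t : ℝ} :
    Bf μ f ≤ t ↔ 0 ≤ t ∧ ∀ j, f j = neg → pOf μ j ≤ t := by
  rw [Bf, Finset.max'_le_iff]
  constructor
  · intro h
    exact ⟨h 0 (Finset.mem_insert_self _ _),
      fun j hj => h _ (Finset.mem_insert_of_mem (Finset.mem_image_of_mem _ (by simp [hj])))⟩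
  · rintro ⟨h0, h⟩ y hy
    rcases Finset.mem_insert.1 hy with rfl | hy
    · exact h0
    · obtain ⟨j, hj, rfl⟩ := Finset.mem_image.1 hy
      exact h j (Finset.mem_filter.1 hj).2

lemma lt_Af_iff {f : Fin n → Sgn} {t : ℝ} :
    t < Af μ f ↔ t < 1 ∧ ∀ i, f i = one → t < pOf μ i := by
  rw [Af, Finset.lt_min'_iff]
  constructor
  · intro h
    exact ⟨h 1 (Finset.mem_insert_self _ _),
      fun i hi => h _ (Finset.mem_insert_of_mem (Finset.mem_image_of_mem _ (by simp [hi])))⟩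
  · rintro ⟨h0, h⟩ y hy
    rcases Finset.mem_insert.1 hy with rfl | hy
    · exact h0
    · obtain ⟨i, hi, rfl⟩ := Finset.mem_image.1 hy
      exact h i (Finset.mem_filter.1 hi).2

lemma thr_char {f : Fin n → Sgn} {t : ℝ} :
    (Bf μ f ≤ t ∧ t < Af μ f) ↔ (0 ≤ t ∧ t < 1 ∧ thr μ t = f) := by
  rw [Bf_le_iff, lt_Af_iff]
  constructor
  · rintro ⟨⟨h0, hB⟩, h1, hA⟩
    refine ⟨h0, h1, funext fun k => ?_⟩
    rcases sgn_cases (f k) with hk | hk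
    · rw [hk, thr, if_pos (hA k hk)]
    · rw [hk, thr, if_neg (not_lt.2 (hB k hk))]
  · rintro ⟨h0, h1, ht⟩
    refine ⟨⟨h0, fun j hj => ?_⟩, h1, fun i hi => ?_⟩
    · by_contra h
      push_neg at h
      have : thr μ t j = one := if_pos h
      rw [ht, hj] at this; exact neg_ne_one this
    · by_contra h
      push_neg at h
      have : thr μ t i = neg := if_neg (not_lt.2 h)
      rw [ht, hi] at this; exact one_ne_neg this

lemma Ico_eq (f : Fin n → Sgn) :
    Ico (Bf μ f) (Af μ f) = {t : ℝ | 0 ≤ t ∧ t < 1 ∧ thr μ t = f} := by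
  ext t
  simpa [Ico] using thr_char (μ := μ) (f := f) (t := t)

lemma disj : PairwiseDisjoint (↑(Finset.univ : Finset (Fin n → Sgn)))
    (fun f => Ico (Bf μ f) (Af μ f)) := by
  intro f _ g _ hfg
  refine Set.disjoint_left.2 fun t htf htg => hfg ?_
  have htf' : t ∈ Ico (Bf μ f) (Af μ f) := htf
  have htg' : t ∈ Ico (Bf μ g) (Af μ g) := htg
  rw [Ico_eq] at htf' htg'
  rw [← htf'.2.2, ← htg'.2.2]

lemma vol_ofReal (f : Fin n → Sgn) :
    volume (Ico (Bf μ f) (Af μ f)) = ENNReal.ofReal (Tm μ f) := by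
  rw [Real.volume_Ico, Tm]
  rcases le_total (Af μ f - Bf μ f) 0 with h | h
  · rw [ENNReal.ofReal_of_nonpos h, max_eq_left h, ENNReal.ofReal_zero]
  · rw [max_eq_right h]

lemma Tm_nonneg (f : Fin n → Sgn) : 0 ≤ Tm μ f := le_max_left _ _

lemma union_total : (⋃ f ∈ (Finset.univ : Finset (Fin n → Sgn)), Ico (Bf μ f) (Af μ f))
    = Ico (0:ℝ) 1 := by
  ext t
  simp only [Set.mem_iUnion, Finset.mem_univ, iUnion_true, Ico_eq, Set.mem_setOf_eq,
    Set.mem_Ico]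
  constructor
  · rintro ⟨f, h0, h1, _⟩; exact ⟨h0, h1⟩
  · rintro ⟨h0, h1⟩; exact ⟨thr μ t, h0, h1, rfl⟩

lemma Tm_total : ∑ f, Tm μ f = 1 := by
  have key : ∑ f : Fin n → Sgn, volume (Ico (Bf μ f) (Af μ f)) = volume (Ico (0:ℝ) 1) := by
    rw [← measure_biUnion_finset disj (fun f _ => measurableSet_Ico), union_total]
  simp only [vol_ofReal] at key
  rw [Real.volume_Ico] at key
  rw [← ENNReal.ofReal_sum_of_nonneg (fun f _ => Tm_nonneg f)] at key
  rw [show (1:ℝ) - 0 = 1 by ring] at key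
  exact (ENNReal.ofReal_eq_ofReal_iff
    (Finset.sum_nonneg fun f _ => Tm_nonneg f) (by norm_num)).1 key

lemma union_marg (i : Fin n) :
    (⋃ f ∈ Finset.univ.filter (fun f : Fin n → Sgn => f i = one), Ico (Bf μ f) (Af μ f))
    = Ico (0:ℝ) (pOf μ i) := by
  ext t
  simp only [Set.mem_iUnion, Finset.mem_filter, Finset.mem_univ, true_and, Ico_eq,
    Set.mem_setOf_eq, Set.mem_Ico]
  constructor
  · rintro ⟨f, hfi, h0, h1, hf⟩
    refine ⟨h0, ?_⟩
    have : thr μ t i = one := by rw [hf, hfi]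
    by_contra h
    push_neg at h
    rw [thr, if_neg (not_lt.2 h)] at this
    exact neg_ne_one this
  · rintro ⟨h0, hlt⟩
    refine ⟨thr μ t, ?_, h0, lt_of_lt_of_le hlt (pOf_le_one i), rfl⟩
    exact if_pos hlt

lemma Tm_marg (i : Fin n) : Pr (Tm μ) (fun f => f i = one) = pOf μ i := by
  have key : ∑ f ∈ Finset.univ.filter (fun f : Fin n → Sgn => f i = one),
      volume (Ico (Bf μ f) (Af μ f)) = volume (Ico (0:ℝ) (pOf μ i)) := by
    rw [← measure_biUnion_finset (disj.subset (by simp [Finset.coe_subset]))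
      (fun f _ => measurableSet_Ico), union_marg]
  simp only [vol_ofReal] at key
  rw [Real.volume_Ico] at key
  rw [← ENNReal.ofReal_sum_of_nonneg (fun f _ => Tm_nonneg f), sub_zero] at key
  have h2 := (ENNReal.ofReal_eq_ofReal_iff
    (Finset.sum_nonneg fun f _ => Tm_nonneg f)
    (pOf_nonneg (μ := μ) i)).1 key
  rw [Pr, ← Finset.sum_filter]
  exact h2

lemma Tm_mono_support (f : Fin n → Sgn) (h : Tm μ f ≠ 0) : MonoF μ f := by
  intro i j hij hfi
  rcases sgn_cases (f j) with hj | hj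
  · exact hj
  · exfalso
    apply h
    have h1 : Af μ f ≤ Bf μ f := le_trans (Af_le f hfi) (le_trans hij (le_Bf f hj))
    rw [Tm, max_eq_left (by linarith)]
end Construction

section Final
variable {n : ℕ} {μ : Fin n → FDist Sgn}

lemma Pr_neg_marg {m : (Fin n → Sgn) → ℝ} (ht : ∑ f, m f = 1) (i : Fin n) :
    Pr m (fun f => f i = neg) = 1 - Pr m (fun f => f i = one) := by
  have hsplit := Pr_split (m := m) (φ := fun _ => True) (ψ := fun f => f i = one)
  rw [Pr_total ht] at hsplit
  have h1 : Pr m (fun f => True ∧ f i = one) = Pr m (fun f => f i = one) :=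
    Pr_congr fun f _ => by simp
  have h2 : Pr m (fun f => True ∧ ¬ f i = one) = Pr m (fun f => f i = neg) :=
    Pr_congr fun f _ => by simp [ne_one_iff]
  rw [h1, h2] at hsplit
  linarith

noncomputable def Tdist (μ : Fin n → FDist Sgn) : FDist (Fin n → Sgn) :=
  ⟨Tm μ, Tm_nonneg, Tm_total⟩

lemma Tdist_coupling : IsCouplingFam μ (Tdist μ) := by
  intro i
  funext y
  have hone : push (Tdist μ).m (fun f => f i) one = Pr (Tm μ) (fun f => f i = one) := by
    unfold push Pr Tdist
    exact Finset.sum_congr rfl fun f _ => by congr 1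
  have hneg : push (Tdist μ).m (fun f => f i) neg = Pr (Tm μ) (fun f => f i = neg) := by
    unfold push Pr Tdist
    exact Finset.sum_congr rfl fun f _ => by congr 1
  rcases sgn_cases y with rfl | rfl
  · rw [hone, Tm_marg i]; rfl
  · rw [hneg, Pr_neg_marg Tm_total, Tm_marg i, mneg]

lemma x_le {T : FDist (Fin n → Sgn)} (hc : IsCouplingFam μ T) (i j : Fin n) :
    Pr T.m (fun f => f i = one ∧ f j = one) ≤ min (pOf μ i) (pOf μ j) := by
  refine le_min ?_ ?_
  · rw [← marg_one hc i]; exact Pr_mono T.nonneg fun f h => h.1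
  · rw [← marg_one hc j]; exact Pr_mono T.nonneg fun f h => h.2

lemma x_eq_min {T : FDist (Fin n → Sgn)} (hc : IsCouplingFam μ T)
    (hs : ∀ f, T.m f ≠ 0 → MonoF μ f) (i j : Fin n) :
    Pr T.m (fun f => f i = one ∧ f j = one) = min (pOf μ i) (pOf μ j) := by
  rcases le_total (pOf μ i) (pOf μ j) with h | h
  · rw [min_eq_left h, ← marg_one hc i]
    exact Pr_congr fun f hf => ⟨fun hh => hh.1, fun hh => ⟨hh, hs f hf i j h hh⟩⟩
  · rw [min_eq_right h, ← marg_one hc j]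
    exact Pr_congr fun f hf => ⟨fun hh => hh.2, fun hh => ⟨hs f hf j i h hh, hh⟩⟩

lemma Tdist_multimax : IsMultimax μ (Tdist μ) := by
  intro i j T' hc'
  rw [prEq_formula hc', prEq_formula (Tdist_coupling (μ := μ)),
    x_eq_min (Tdist_coupling (μ := μ)) Tm_mono_support]
  have := x_le hc' i j
  linarith

end Final

/-- For any finite family of probability distributions on {−1,1} there is one and only
one multimaximal coupling. -/
theorem stmt5 (n : ℕ) (μ : Fin n → FDist Sgn) :
    ∃! T : FDist (Fin n → Sgn), IsCouplingFam μ T ∧ IsMultimax μ T := by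
  refine ⟨Tdist μ, ⟨Tdist_coupling, Tdist_multimax⟩, ?_⟩
  rintro T' ⟨hc', hm'⟩
  refine eq_of_mono hc' Tdist_coupling ?_ Tm_mono_support
  intro f hf i j hij hfi
  rcases sgn_cases (f j) with hj | hj
  · exact hj
  · exfalso
    -- pairwise maximality forces zero cross-probability
    have hx : Pr T'.m (fun g => g i = one ∧ g j = one) = min (pOf μ i) (pOf μ j) := by
      have h1 := hm' i j (Tdist μ) Tdist_coupling
      rw [prEq_formula hc', prEq_formula (Tdist_coupling (μ := μ)),
        x_eq_min (Tdist_coupling (μ := μ)) Tm_mono_support] at h1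
      have h2 := x_le hc' i j
      linarith
    have hsplit : Pr T'.m (fun g => g i = one)
        = Pr T'.m (fun g => g i = one ∧ g j = one)
          + Pr T'.m (fun g => g i = one ∧ g j = neg) := by
      rw [Pr_split (ψ := fun g => g j = one)]
      congr 1
      exact Pr_congr fun g _ => by
        rcases sgn_cases (g j) with h | h <;> simp [h, one_ne_neg, neg_ne_one]
    have hz : Pr T'.m (fun g => g i = one ∧ g j = neg) = 0 := by
      rw [marg_one hc', hx, min_eq_left hij] at hsplit
      linarith
    have hterm := (Finset.sum_eq_zero_iff_of_nonneg
      (fun g _ => by by_cases h : g i = one ∧ g j = neg <;> simp [h, T'.nonneg g])).1 hz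
      f (Finset.mem_univ f)
    rw [if_pos ⟨hfi, hj⟩] at hterm
    exact hf hterm
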